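/- Suppose the model gradient g_k satisfies ‖g_k‖ ≥ Δ_k/μ at every criticality-loop iteration i, where the radius is Δ_k^i = ω^{i−1}·Δ_k^0 with ω ∈ (0,1), and each model m_k^i is fully linear with gradient error constant κ_eg. If ‖∇f(x_k)‖ > 0, then the criticality loop cannot fail at every iteration; i.e., there cannot exist an infinite sequence of iterations with μ‖g_k^i‖ < ω^{i−1}·Δ_k^0 for all i ≥ 1. -/

import Mathlib

/-- The criticality loop cannot fail at every iteration: if `∇f(x_k) ≠ 0`,
each model `m_k^i` is fully linear on `B(x_k, ω^{i-1}·Δ_k^0)` with constant `κ_eg`,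
then it cannot hold that `μ‖g_k^i‖ < ω^{i-1}·Δ_k^0` for all `i ≥ 1`. -/
theorem stmt1 {n : ℕ} (f : EuclideanSpace ℝ (Fin n) → ℝ)
    (xk : EuclideanSpace ℝ (Fin n)) (g : ℕ → EuclideanSpace ℝ (Fin n))
    (Δ0 ω μ κeg : ℝ)
    (hΔ0 : 0 < Δ0) (hω : ω ∈ Set.Ioo (0:ℝ) 1) (hμ : 0 < μ) (hκ : 0 < κeg)
    (hgradne : gradient f xk ≠ 0)
    (hFL : ∀ i : ℕ, 1 ≤ i → ‖gradient f xk - g i‖ ≤ κeg * (ω ^ (i - 1) * Δ0)) :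
    ¬ (∀ i : ℕ, 1 ≤ i → μ * ‖g i‖ < ω ^ (i - 1) * Δ0) := by
  intro h
  have hg : 0 < ‖gradient f xk‖ := norm_pos_iff.mpr hgradne
  set c : ℝ := (κeg + 1 / μ) * Δ0 with hc
  have hcpos : 0 < c := by positivity
  obtain ⟨N, hN⟩ := exists_pow_lt_of_lt_one (div_pos hg hcpos) hω.2
  have hkey := h (N + 1) (Nat.le_add_left 1 N)
  have hFLkey := hFL (N + 1) (Nat.le_add_left 1 N)
  simp only [Nat.add_sub_cancel] at hkey hFLkey
  have hgi : ‖g (N + 1)‖ < ω ^ N * Δ0 / μ := by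
    rw [lt_div_iff₀ hμ]; linarith [hkey]
  have htri : ‖gradient f xk‖ ≤ ‖gradient f xk - g (N + 1)‖ + ‖g (N + 1)‖ :=
    by simpa using norm_add_le (gradient f xk - g (N+1)) (g (N+1))
  have hbound : ‖gradient f xk‖ < c * ω ^ N := by
    have : κeg * (ω ^ N * Δ0) + ω ^ N * Δ0 / μ = c * ω ^ N := by
      rw [hc]; field_simp
    linarith
  have : c * ω ^ N < c * (‖gradient f xk‖ / c) := by
    exact mul_lt_mul_of_pos_left hN hcpos
  rw [mul_div_cancel₀ _ (ne_of_gt hcpos)] at this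
  linarith
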